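/- Let Assumptions on the network and weights hold (network connectivity with window Q and doubly stochastic weight matrices with entries bounded below by η on edges). Then for all k ≥ s ≥ 0 and all i, j ∈ V, the matrix products Φ(k,s) = W(k)W(k−1)⋯W(s) satisfy |[Φ(k,s)]_{ij} − 1/m| ≤ θ β^{k−s}, where θ = (1 − η/(4m²))^{−2} and β = (1 − η/(4m²))^{1/Q}. -/

import Mathlib

/-- `Phi W s n` is the backward matrix product `W(s+n) ⋯ W(s+1) W(s)`,
i.e. `Φ(k, s)` of the paper with `k = s + n`. -/
def Phi {m : ℕ} (W : ℕ → Matrix (Fin m) (Fin m) ℝ) (s : ℕ) : ℕ → Matrix (Fin m) (Fin m) ℝ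
  | 0 => W s
  | n + 1 => W (s + n + 1) * Phi W s n

namespace PhiAux

variable {m : ℕ} (W : ℕ → Matrix (Fin m) (Fin m) ℝ)

/-- trajectory: apply W(k), W(k+1), ... to v. -/
def traj (k : ℕ) (v : Fin m → ℝ) : ℕ → Fin m → ℝ
  | 0 => v
  | t+1 => fun i => ∑ j, W (k+t) i j * traj k v t j

theorem traj_add (k : ℕ) (v : Fin m → ℝ) (a b : ℕ) :
    traj W k v (a + b) = traj W (k + a) (traj W k v a) b := by
  induction b with
  | zero => rfl
  | succ b ih =>
      have h : k + (a + b) = k + a + b := by omega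
      show traj W k v (a+b+1) = _
      simp only [traj, ih, h]

theorem traj_sub_const (hrow : ∀ k i, ∑ j, W k i j = 1)
    (k : ℕ) (v : Fin m → ℝ) (c : ℝ) (t : ℕ) :
    traj W k (fun i => v i - c) t = fun i => traj W k v t i - c := by
  induction t with
  | zero => rfl
  | succ t ih =>
      funext i
      simp only [traj, ih, mul_sub, Finset.sum_sub_distrib, ← Finset.sum_mul, hrow, one_mul]

theorem Phi_eq_traj (s n : ℕ) (i j : Fin m) :
    Phi W s n i j = traj W (s+1) (fun i => W s i j) n i := by
  induction n generalizing i with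
  | zero => rfl
  | succ n ih =>
      have h : s + 1 + n = s + n + 1 := by omega
      show (W (s+n+1) * Phi W s n) i j = _
      rw [Matrix.mul_apply]
      simp only [traj, ih, h]

theorem sum_traj (hcol : ∀ k j, ∑ i, W k i j = 1)
    (k : ℕ) (v : Fin m → ℝ) (t : ℕ) :
    ∑ i, traj W k v t i = ∑ i, v i := by
  induction t with
  | zero => rfl
  | succ t ih =>
      calc ∑ i, traj W k v (t+1) i = ∑ i, ∑ j, W (k+t) i j * traj W k v t j := rfl
        _ = ∑ j, (∑ i, W (k+t) i j) * traj W k v t j := by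
              rw [Finset.sum_comm]; simp [Finset.sum_mul]
        _ = ∑ i, v i := by simp [hcol, ih]

end PhiAux

namespace PhiAux

variable {m : ℕ}

/-- mean of row i -/
def mu (w : Matrix (Fin m) (Fin m) ℝ) (v : Fin m → ℝ) (i : Fin m) : ℝ := ∑ j, w i j * v j

/-- per-row variance -/
def Var (w : Matrix (Fin m) (Fin m) ℝ) (v : Fin m → ℝ) (i : Fin m) : ℝ :=
  ∑ j, w i j * (v j - mu w v i) ^ 2

theorem Var_nonneg (w : Matrix (Fin m) (Fin m) ℝ) (hw : ∀ i j, 0 ≤ w i j)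
    (v : Fin m → ℝ) (i : Fin m) : 0 ≤ Var w v i :=
  Finset.sum_nonneg fun j _ => mul_nonneg (hw i j) (sq_nonneg _)

theorem step_identity (w : Matrix (Fin m) (Fin m) ℝ)
    (hrow : ∀ i, ∑ j, w i j = 1) (hcol : ∀ j, ∑ i, w i j = 1) (v : Fin m → ℝ) :
    (∑ j, (v j) ^ 2) - ∑ i, (mu w v i) ^ 2 = ∑ i, Var w v i := by
  have h1 : ∀ i, Var w v i = (∑ j, w i j * v j ^ 2) - mu w v i ^ 2 := by
    intro i
    have e : ∀ j, w i j * (v j - mu w v i) ^ 2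
        = w i j * v j ^ 2 - 2 * mu w v i * (w i j * v j) + mu w v i ^ 2 * w i j := by
      intro j; ring
    rw [Var, Finset.sum_congr rfl fun j _ => e j]
    simp only [Finset.sum_add_distrib, Finset.sum_sub_distrib, ← Finset.mul_sum, hrow]
    rw [show (∑ j, w i j * v j) = mu w v i from rfl]
    ring
  rw [Finset.sum_congr rfl fun i _ => h1 i, Finset.sum_sub_distrib]
  have h2 : ∑ i, ∑ j, w i j * v j ^ 2 = ∑ j, (v j) ^ 2 := by
    rw [Finset.sum_comm]
    simp only [← Finset.sum_mul, hcol, one_mul]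
  rw [h2]

theorem sq_sum_le (w : Matrix (Fin m) (Fin m) ℝ) (hw : ∀ i j, 0 ≤ w i j)
    (hrow : ∀ i, ∑ j, w i j = 1) (hcol : ∀ j, ∑ i, w i j = 1) (v : Fin m → ℝ) :
    ∑ i, (mu w v i) ^ 2 ≤ ∑ j, (v j) ^ 2 := by
  have := step_identity w hrow hcol v
  have h := Finset.sum_nonneg fun i (_ : i ∈ Finset.univ) => Var_nonneg w hw v i
  linarith

theorem Var_pair_bound (w : Matrix (Fin m) (Fin m) ℝ) (hw : ∀ i j, 0 ≤ w i j)
    (v : Fin m → ℝ) (η : ℝ) (hη : 0 ≤ η) (i j : Fin m) (hij : i ≠ j)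
    (hii : η ≤ w i i) (hijw : η ≤ w i j) :
    η / 2 * (v i - v j) ^ 2 ≤ Var w v i := by
  have hsub : ({i, j} : Finset (Fin m)) ⊆ Finset.univ := Finset.subset_univ _
  have hpair : ∑ l ∈ ({i, j} : Finset (Fin m)), w i l * (v l - mu w v i) ^ 2
      ≤ Var w v i := by
    apply Finset.sum_le_sum_of_subset_of_nonneg hsub
    intro l _ _
    exact mul_nonneg (hw i l) (sq_nonneg _)
  rw [Finset.sum_pair hij] at hpair
  have h1 : η * (v i - mu w v i) ^ 2 ≤ w i i * (v i - mu w v i) ^ 2 :=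
    mul_le_mul_of_nonneg_right hii (sq_nonneg _)
  have h2 : η * (v j - mu w v i) ^ 2 ≤ w i j * (v j - mu w v i) ^ 2 :=
    mul_le_mul_of_nonneg_right hijw (sq_nonneg _)
  nlinarith [sq_nonneg ((v i - mu w v i) + (v j - mu w v i))]

end PhiAux

namespace PhiAux

theorem window_lemma {m : ℕ} (hm : 0 < m)
    (Ed : ℕ → Fin m → Fin m → Prop)
    (W : ℕ → Matrix (Fin m) (Fin m) ℝ)
    (hself : ∀ k i, Ed k i i)
    (hW0 : ∀ k i j, 0 ≤ W k i j)
    (hWsupp : ∀ k i j, ¬ Ed k i j → W k i j = 0)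
    (hrow : ∀ k i, ∑ j, W k i j = 1)
    (hcol : ∀ k j, ∑ i, W k i j = 1)
    (η : ℝ) (hη0 : 0 < η)
    (hWη : ∀ k i j, Ed k i j → η ≤ W k i j)
    (Q : ℕ)
    (hconn : ∀ k, ∀ i j : Fin m,
      Relation.ReflTransGen (fun u w => ∃ ℓ < Q, Ed (k + ℓ) u w) i j)
    (k : ℕ) (v : Fin m → ℝ) (hmean : ∑ i, v i = 0) :
    ∑ i, (traj W k v Q i) ^ 2 ≤ (1 - η / (m : ℝ) ^ 2) * ∑ i, (v i) ^ 2 := by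
  classical
  have hne : Nonempty (Fin m) := ⟨⟨0, hm⟩⟩
  set x : ℕ → Fin m → ℝ := traj W k v with hxdef
  set V : ℕ → ℝ := fun t => ∑ i, (x t i) ^ 2 with hVdef
  have hx : ∀ t i, x (t+1) i = ∑ j, W (k+t) i j * x t j := fun _ _ => rfl
  -- sorting permutation
  set σ : Equiv.Perm (Fin m) := Tuple.sort v with hσdef
  have hmono : Monotone (v ∘ σ) := Tuple.monotone_sort v
  set Z : ℕ → ℝ := fun l => v (σ ⟨min l (m-1), by omega⟩) with hZdef
  have hZmono : Monotone Z := by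
    intro a b hab
    exact hmono (show (⟨min a (m-1), _⟩ : Fin m) ≤ ⟨min b (m-1), _⟩ from
      Fin.mk_le_mk.2 (min_le_min_right _ hab))
  set pos : Fin m → ℕ := fun u => ((σ.symm u : Fin m) : ℕ) with hposdef
  have hposlt : ∀ u, pos u ≤ m - 1 := fun u => by
    show ((σ.symm u : Fin m) : ℕ) ≤ m - 1
    have := (σ.symm u).isLt; omega
  have hZv : ∀ u, v u = Z (pos u) := by
    intro u
    have h1 : (⟨min (pos u) (m-1), by omega⟩ : Fin m) = σ.symm u := by
      apply Fin.ext
      simp only [min_eq_left (hposlt u)]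
      rfl
    simp only [hZdef, h1, Equiv.apply_symm_apply]
  -- crossing predicate
  set Cross : ℕ → ℕ → Prop := fun ℓ t => ∃ u w', Ed (k+t) u w' ∧
      ((ℓ < pos u ∧ pos w' ≤ ℓ) ∨ (pos u ≤ ℓ ∧ ℓ < pos w')) with hCrossdef
  -- preservation
  have hpres : ∀ ℓ t, (∀ t' < t, ¬ Cross ℓ t') →
      (∀ u : Fin m, ℓ < pos u → Z (ℓ+1) ≤ x t u) ∧
      (∀ u : Fin m, pos u ≤ ℓ → x t u ≤ Z ℓ) := by
    intro ℓ t
    induction t with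
    | zero =>
        intro _
        constructor
        · intro u hu
          have : v u = Z (pos u) := hZv u
          rw [show x 0 u = v u from rfl, this]
          exact hZmono hu
        · intro u hu
          rw [show x 0 u = v u from rfl, hZv u]
          exact hZmono hu
    | succ t ih =>
        intro hnc
        have ihh := ih (fun t' ht' => hnc t' (Nat.lt_succ_of_lt ht'))
        have hedge : ∀ u j : Fin m, W (k+t) u j ≠ 0 → Ed (k+t) u j := by
          intro u j h
          by_contra hc
          exact h (hWsupp _ _ _ hc)
        constructor
        · intro u hu
          rw [hx]
          have hterm : ∀ j : Fin m, W (k+t) u j * Z (ℓ+1) ≤ W (k+t) u j * x t j := by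
            intro j
            by_cases h0 : W (k+t) u j = 0
            · simp [h0]
            · have hEd := hedge u j h0
              have hjtop : ℓ < pos j := by
                by_contra hc
                push_neg at hc
                exact hnc t (Nat.lt_succ_self t) ⟨u, j, hEd, Or.inl ⟨hu, hc⟩⟩
              exact mul_le_mul_of_nonneg_left (ihh.1 j hjtop) (hW0 _ _ _)
          calc Z (ℓ+1) = ∑ j, W (k+t) u j * Z (ℓ+1) := by
                rw [← Finset.sum_mul, hrow, one_mul]
            _ ≤ ∑ j, W (k+t) u j * x t j := Finset.sum_le_sum fun j _ => hterm j
        · intro u hu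
          rw [hx]
          have hterm : ∀ j : Fin m, W (k+t) u j * x t j ≤ W (k+t) u j * Z ℓ := by
            intro j
            by_cases h0 : W (k+t) u j = 0
            · simp [h0]
            · have hEd := hedge u j h0
              have hjbot : pos j ≤ ℓ := by
                by_contra hc
                push_neg at hc
                exact hnc t (Nat.lt_succ_self t) ⟨u, j, hEd, Or.inr ⟨hu, hc⟩⟩
              exact mul_le_mul_of_nonneg_left (ihh.2 j hjbot) (hW0 _ _ _)
          calc ∑ j, W (k+t) u j * x t j ≤ ∑ j, W (k+t) u j * Z ℓ :=
                Finset.sum_le_sum fun j _ => hterm j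
            _ = Z ℓ := by rw [← Finset.sum_mul, hrow, one_mul]
  -- crossing existence
  have hcrossex : ∀ ℓ, ℓ + 1 < m → ∃ t, t < Q ∧ Cross ℓ t := by
    intro ℓ hℓ
    by_contra hno
    push_neg at hno
    have key : ∀ b : Fin m,
        Relation.ReflTransGen (fun u w => ∃ l < Q, Ed (k + l) u w) (σ ⟨m-1, by omega⟩) b →
        ℓ < pos b := by
      intro b hb
      induction hb with
      | refl =>
          show ℓ < pos (σ ⟨m-1, by omega⟩)
          simp only [hposdef, Equiv.symm_apply_apply]
          omega
      | tail h1 h2 ih =>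
          obtain ⟨l, hlQ, hEd⟩ := h2
          by_contra hc
          push_neg at hc
          exact hno l hlQ ⟨_, _, hEd, Or.inl ⟨ih, hc⟩⟩
    have h0 := key (σ ⟨0, hm⟩) (hconn k _ _)
    simp only [hposdef, Equiv.symm_apply_apply] at h0
    omega
  -- choose minimal crossing data
  have hdata : ∀ ℓ ∈ Finset.range (m-1), ∃ t : ℕ, ∃ u w' : Fin m,
      (t < Q) ∧ (Ed (k+t) u w') ∧
      ((ℓ < pos u ∧ pos w' ≤ ℓ) ∨ (pos u ≤ ℓ ∧ ℓ < pos w')) ∧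
      (∀ t' < t, ¬ Cross ℓ t') := by
    intro ℓ hℓ
    have hℓm : ℓ + 1 < m := by
      have := Finset.mem_range.1 hℓ; omega
    have hex := hcrossex ℓ hℓm
    set t0 := Nat.find hex with ht0
    obtain ⟨ht0Q, u, w', hEd, hside⟩ := Nat.find_spec hex
    refine ⟨t0, u, w', ht0Q, hEd, hside, ?_⟩
    intro t' ht' hcr
    exact (Nat.find_min hex ht') ⟨lt_trans ht' ht0Q, hcr⟩
  choose! T I J hTQ hTEd hTside hTmin using hdata
  -- gaps
  set A : ℕ → ℝ := fun ℓ => Z (ℓ+1) - Z ℓ with hAdef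
  have hA0 : ∀ ℓ, 0 ≤ A ℓ := fun ℓ => sub_nonneg.2 (hZmono (Nat.le_succ ℓ))
  have htel : ∀ a b : ℕ, a ≤ b → ∑ ℓ ∈ Finset.Ico a b, A ℓ = Z b - Z a := by
    intro a b hab
    rw [Finset.sum_Ico_eq_sum_range]
    have : ∀ r, A (a + r) = Z (a + (r+1)) - Z (a + r) := by
      intro r
      have h : a + r + 1 = a + (r+1) := by omega
      simp only [hAdef, h]
    rw [Finset.sum_congr rfl fun r _ => this r]
    rw [Finset.sum_range_sub (fun r => Z (a + r)) (b - a)]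
    rw [Nat.add_zero, Nat.add_sub_cancel' hab]
  have hsumsq : ∀ s : Finset ℕ, ∑ ℓ ∈ s, (A ℓ)^2 ≤ (∑ ℓ ∈ s, A ℓ)^2 := by
    intro s
    calc ∑ ℓ ∈ s, (A ℓ)^2 ≤ ∑ ℓ ∈ s, A ℓ * (∑ l ∈ s, A l) :=
          Finset.sum_le_sum fun ℓ hℓ => by
            rw [sq]
            exact mul_le_mul_of_nonneg_left
              (Finset.single_le_sum (fun l _ => hA0 l) hℓ) (hA0 ℓ)
      _ = (∑ ℓ ∈ s, A ℓ)^2 := by rw [← Finset.sum_mul, sq]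

  -- V step identity
  have hVstep : ∀ t, V t - V (t+1) = ∑ i, Var (W (k+t)) (x t) i := by
    intro t
    have h := step_identity (W (k+t)) (fun i => hrow _ i) (fun j => hcol _ j) (x t)
    exact h
  have htele : ∀ n, V n + ∑ t ∈ Finset.range n, (∑ i, Var (W (k+t)) (x t) i) = V 0 := by
    intro n
    induction n with
    | zero => simp
    | succ n ih =>
        rw [Finset.sum_range_succ]
        have := hVstep n
        linarith
  -- fiber bound
  have hfiber : ∀ p : ℕ × Fin m, p.1 < Q →
      η/4 * ∑ ℓ ∈ (Finset.range (m-1)).filter (fun ℓ => (T ℓ, I ℓ) = p), (A ℓ)^2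
        ≤ Var (W (k+p.1)) (x p.1) p.2 := by
    rintro ⟨t, i⟩ htQ
    set L := (Finset.range (m-1)).filter (fun ℓ => (T ℓ, I ℓ) = (t, i)) with hLdef
    have hLprop : ∀ ℓ ∈ L, ℓ ∈ Finset.range (m-1) ∧ T ℓ = t ∧ I ℓ = i := by
      intro ℓ hℓ
      rw [hLdef, Finset.mem_filter] at hℓ
      exact ⟨hℓ.1, congrArg Prod.fst hℓ.2, congrArg Prod.snd hℓ.2⟩
    have hVar0 := Var_nonneg (W (k+t)) (fun a b => hW0 _ a b) (x t) i
    set Lp := L.filter (fun ℓ => ℓ < pos i) with hLpdef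
    set Ln := L.filter (fun ℓ => ¬ ℓ < pos i) with hLndef
    have hplus : η/2 * ∑ ℓ ∈ Lp, (A ℓ)^2 ≤ Var (W (k+t)) (x t) i := by
      rcases Finset.eq_empty_or_nonempty Lp with he | hne
      · rw [he]
        simp only [Finset.sum_empty, mul_zero]
        exact hVar0
      · set ℓ₀ := Lp.min' hne with hl0def
        set ℓ₁ := Lp.max' hne with hl1def
        have h0mem := Lp.min'_mem hne
        have h1mem := Lp.max'_mem hne
        have h0L : ℓ₀ ∈ L := Finset.mem_of_mem_filter _ h0mem
        have h1L : ℓ₁ ∈ L := Finset.mem_of_mem_filter _ h1mem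
        have h0pos : ℓ₀ < pos i := (Finset.mem_filter.1 h0mem).2
        have h1pos : ℓ₁ < pos i := (Finset.mem_filter.1 h1mem).2
        obtain ⟨h0rng, h0T, h0I⟩ := hLprop ℓ₀ h0L
        obtain ⟨h1rng, h1T, h1I⟩ := hLprop ℓ₁ h1L
        have h01 : ℓ₀ ≤ ℓ₁ := Lp.min'_le _ h1mem
        have hxi : Z (ℓ₁+1) ≤ x t i := by
          have hmin := hTmin ℓ₁ h1rng
          rw [h1T] at hmin
          exact (hpres ℓ₁ t hmin).1 i h1pos
        have hEd0 := hTEd ℓ₀ h0rng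
        have hside0 := hTside ℓ₀ h0rng
        rw [h0T] at hEd0
        rw [h0I] at hEd0 hside0
        have hjbot : pos (J ℓ₀) ≤ ℓ₀ := by
          rcases hside0 with ⟨_, h⟩ | ⟨h, _⟩
          · exact h
          · omega
        have hxj : x t (J ℓ₀) ≤ Z ℓ₀ := by
          have hmin := hTmin ℓ₀ h0rng
          rw [h0T] at hmin
          exact (hpres ℓ₀ t hmin).2 _ hjbot
        have hij : i ≠ J ℓ₀ := by
          intro h; rw [← h] at hjbot; omega
        have hgap0 : 0 ≤ Z (ℓ₁+1) - Z ℓ₀ := sub_nonneg.2 (hZmono (by omega))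
        have hchain : ∑ ℓ ∈ Lp, (A ℓ)^2 ≤ (x t i - x t (J ℓ₀))^2 := by
          calc ∑ ℓ ∈ Lp, (A ℓ)^2 ≤ ∑ ℓ ∈ Finset.Ico ℓ₀ (ℓ₁+1), (A ℓ)^2 := by
                apply Finset.sum_le_sum_of_subset_of_nonneg
                · intro ℓ hℓ
                  rw [Finset.mem_Ico]
                  exact ⟨Lp.min'_le _ hℓ, Nat.lt_succ_of_le (Lp.le_max' _ hℓ)⟩
                · intro ℓ _ _; exact sq_nonneg _
            _ ≤ (∑ ℓ ∈ Finset.Ico ℓ₀ (ℓ₁+1), A ℓ)^2 := hsumsq _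
            _ = (Z (ℓ₁+1) - Z ℓ₀)^2 := by rw [htel _ _ (by omega)]
            _ ≤ (x t i - x t (J ℓ₀))^2 := by
                  apply pow_le_pow_left₀ hgap0 (by linarith)
        have hvarb := Var_pair_bound (W (k+t)) (fun a b => hW0 _ a b) (x t) η hη0.le
          i (J ℓ₀) hij (hWη _ _ _ (hself _ i)) (hWη _ _ _ hEd0)
        calc η/2 * ∑ ℓ ∈ Lp, (A ℓ)^2 ≤ η/2 * (x t i - x t (J ℓ₀))^2 :=
              mul_le_mul_of_nonneg_left hchain (by linarith)
          _ ≤ Var (W (k+t)) (x t) i := hvarb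
    have hminus : η/2 * ∑ ℓ ∈ Ln, (A ℓ)^2 ≤ Var (W (k+t)) (x t) i := by
      rcases Finset.eq_empty_or_nonempty Ln with he | hne
      · rw [he]
        simp only [Finset.sum_empty, mul_zero]
        exact hVar0
      · set ℓ₀ := Ln.min' hne with hl0def
        set ℓ₁ := Ln.max' hne with hl1def
        have h0mem := Ln.min'_mem hne
        have h1mem := Ln.max'_mem hne
        have h0L : ℓ₀ ∈ L := Finset.mem_of_mem_filter _ h0mem
        have h1L : ℓ₁ ∈ L := Finset.mem_of_mem_filter _ h1mem
        have h0pos : pos i ≤ ℓ₀ := by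
          have := (Finset.mem_filter.1 h0mem).2; omega
        have h1pos : pos i ≤ ℓ₁ := by
          have := (Finset.mem_filter.1 h1mem).2; omega
        obtain ⟨h0rng, h0T, h0I⟩ := hLprop ℓ₀ h0L
        obtain ⟨h1rng, h1T, h1I⟩ := hLprop ℓ₁ h1L
        have h01 : ℓ₀ ≤ ℓ₁ := Ln.min'_le _ h1mem
        have hxi : x t i ≤ Z ℓ₀ := by
          have hmin := hTmin ℓ₀ h0rng
          rw [h0T] at hmin
          exact (hpres ℓ₀ t hmin).2 i h0pos
        have hEd1 := hTEd ℓ₁ h1rng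
        have hside1 := hTside ℓ₁ h1rng
        rw [h1T] at hEd1
        rw [h1I] at hEd1 hside1
        have hjtop : ℓ₁ < pos (J ℓ₁) := by
          rcases hside1 with ⟨h, _⟩ | ⟨_, h⟩
          · omega
          · exact h
        have hxj : Z (ℓ₁+1) ≤ x t (J ℓ₁) := by
          have hmin := hTmin ℓ₁ h1rng
          rw [h1T] at hmin
          exact (hpres ℓ₁ t hmin).1 _ hjtop
        have hij : i ≠ J ℓ₁ := by
          intro h; rw [← h] at hjtop; omega
        have hgap0 : 0 ≤ Z (ℓ₁+1) - Z ℓ₀ := sub_nonneg.2 (hZmono (by omega))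
        have hchain : ∑ ℓ ∈ Ln, (A ℓ)^2 ≤ (x t i - x t (J ℓ₁))^2 := by
          have hsymm : (x t (J ℓ₁) - x t i)^2 = (x t i - x t (J ℓ₁))^2 := by ring
          calc ∑ ℓ ∈ Ln, (A ℓ)^2 ≤ ∑ ℓ ∈ Finset.Ico ℓ₀ (ℓ₁+1), (A ℓ)^2 := by
                apply Finset.sum_le_sum_of_subset_of_nonneg
                · intro ℓ hℓ
                  rw [Finset.mem_Ico]
                  exact ⟨Ln.min'_le _ hℓ, Nat.lt_succ_of_le (Ln.le_max' _ hℓ)⟩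
                · intro ℓ _ _; exact sq_nonneg _
            _ ≤ (∑ ℓ ∈ Finset.Ico ℓ₀ (ℓ₁+1), A ℓ)^2 := hsumsq _
            _ = (Z (ℓ₁+1) - Z ℓ₀)^2 := by rw [htel _ _ (by omega)]
            _ ≤ (x t (J ℓ₁) - x t i)^2 := by
                  apply pow_le_pow_left₀ hgap0 (by linarith)
            _ = (x t i - x t (J ℓ₁))^2 := hsymm
        have hvarb := Var_pair_bound (W (k+t)) (fun a b => hW0 _ a b) (x t) η hη0.le
          i (J ℓ₁) hij (hWη _ _ _ (hself _ i)) (hWη _ _ _ hEd1)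
        calc η/2 * ∑ ℓ ∈ Ln, (A ℓ)^2 ≤ η/2 * (x t i - x t (J ℓ₁))^2 :=
              mul_le_mul_of_nonneg_left hchain (by linarith)
          _ ≤ Var (W (k+t)) (x t) i := hvarb
    have hsplit : ∑ ℓ ∈ L, (A ℓ)^2 = ∑ ℓ ∈ Lp, (A ℓ)^2 + ∑ ℓ ∈ Ln, (A ℓ)^2 :=
      (Finset.sum_filter_add_sum_filter_not L _ _).symm
    show η/4 * ∑ ℓ ∈ L, (A ℓ)^2 ≤ Var (W (k+t)) (x t) i
    rw [hsplit]
    linarith [hplus, hminus]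
  -- total accounting
  set SA := ∑ ℓ ∈ Finset.range (m-1), (A ℓ)^2 with hSAdef
  have hSA0 : 0 ≤ SA := Finset.sum_nonneg fun _ _ => sq_nonneg _
  have hmaps : ∀ ℓ ∈ Finset.range (m-1),
      (T ℓ, I ℓ) ∈ Finset.range Q ×ˢ (Finset.univ : Finset (Fin m)) :=
    fun ℓ hℓ => Finset.mem_product.2 ⟨Finset.mem_range.2 (hTQ ℓ hℓ), Finset.mem_univ _⟩
  have hfib := Finset.sum_fiberwise_of_maps_to hmaps (fun ℓ => (A ℓ)^2)
  have hmain : η/4 * SA ≤ V 0 - V Q := by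
    calc η/4 * SA
        = ∑ p ∈ Finset.range Q ×ˢ Finset.univ,
            η/4 * ∑ ℓ ∈ (Finset.range (m-1)).filter (fun ℓ => (T ℓ, I ℓ) = p), (A ℓ)^2 := by
          rw [← Finset.mul_sum, hfib]
      _ ≤ ∑ p ∈ Finset.range Q ×ˢ Finset.univ, Var (W (k+p.1)) (x p.1) p.2 :=
          Finset.sum_le_sum fun p hp =>
            hfiber p (Finset.mem_range.1 (Finset.mem_product.1 hp).1)
      _ = ∑ t ∈ Finset.range Q, ∑ i, Var (W (k+t)) (x t) i := Finset.sum_product _ _ _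
      _ = V 0 - V Q := by have := htele Q; linarith
  have hsumA : ∑ ℓ ∈ Finset.range (m-1), A ℓ = Z (m-1) - Z 0 := by
    rw [Finset.range_eq_Ico]; exact htel 0 (m-1) (Nat.zero_le _)
  have hCS : (Z (m-1) - Z 0)^2 ≤ ((m:ℝ) - 1) * SA := by
    have h := sq_sum_le_card_mul_sum_sq (s := Finset.range (m-1)) (f := A)
    rw [hsumA, Finset.card_range] at h
    have hc : ((m - 1 : ℕ) : ℝ) = (m:ℝ) - 1 := by
      have h1 : (1:ℕ) ≤ m := hm
      push_cast [h1]
      ring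
    rw [hc] at h
    exact h
  have hvbd : V 0 ≤ - ((m:ℝ) * (Z (m-1) * Z 0)) := by
    have h1 : ∀ u : Fin m, (v u)^2 ≤ (Z (m-1) + Z 0) * v u - Z (m-1) * Z 0 := by
      intro u
      have ha : v u ≤ Z (m-1) := by rw [hZv u]; exact hZmono (hposlt u)
      have hb : Z 0 ≤ v u := by rw [hZv u]; exact hZmono (Nat.zero_le _)
      nlinarith
    calc V 0 = ∑ u, (v u)^2 := rfl
      _ ≤ ∑ u, ((Z (m-1) + Z 0) * v u - Z (m-1) * Z 0) := Finset.sum_le_sum fun u _ => h1 u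
      _ = (Z (m-1) + Z 0) * (∑ u, v u) - (m:ℝ) * (Z (m-1) * Z 0) := by
          rw [Finset.sum_sub_distrib, ← Finset.mul_sum, Finset.sum_const, Finset.card_univ,
            Fintype.card_fin]
          push_cast
          ring
      _ = - ((m:ℝ) * (Z (m-1) * Z 0)) := by rw [hmean]; ring
  have hV0nn : 0 ≤ V 0 := Finset.sum_nonneg fun _ _ => sq_nonneg _
  have hmcast : (0:ℝ) ≤ (m:ℝ) := Nat.cast_nonneg m
  have h4V : 4 * V 0 ≤ (m:ℝ) * (Z (m-1) - Z 0)^2 := by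
    nlinarith [sq_nonneg (Z (m-1) + Z 0), hvbd, hmcast]
  have hm1 : (1:ℝ) ≤ (m:ℝ) := by exact_mod_cast hm
  have h4SA : 4 * V 0 ≤ (m:ℝ)^2 * SA := by
    nlinarith [mul_le_mul_of_nonneg_left hCS hmcast, h4V, hSA0, hm1]
  have hm2 : (0:ℝ) < (m:ℝ)^2 := by positivity
  have hkey : η / (m:ℝ)^2 * V 0 ≤ η/4 * SA := by
    rw [div_mul_eq_mul_div, div_le_iff₀ hm2]
    nlinarith [h4SA, hη0.le]
  have hgoal : V Q ≤ (1 - η/(m:ℝ)^2) * V 0 := by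
    rw [sub_mul, one_mul]
    linarith [hkey, hmain]
  have hV00 : V 0 = ∑ i, (v i)^2 := rfl
  show V Q ≤ (1 - η/(m:ℝ)^2) * ∑ i, (v i)^2
  rw [← hV00]
  exact hgoal


end PhiAux

namespace PhiAux

theorem traj_sq_sum_le {m : ℕ} (W : ℕ → Matrix (Fin m) (Fin m) ℝ)
    (hW0 : ∀ k i j, 0 ≤ W k i j)
    (hrow : ∀ k i, ∑ j, W k i j = 1)
    (hcol : ∀ k j, ∑ i, W k i j = 1)
    (k : ℕ) (v : Fin m → ℝ) (t : ℕ) :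
    ∑ i, (traj W k v t i) ^ 2 ≤ ∑ i, (v i) ^ 2 := by
  induction t with
  | zero => exact le_refl _
  | succ t ih =>
      refine le_trans ?_ ih
      exact sq_sum_le (W (k+t)) (fun a b => hW0 _ a b) (fun a => hrow _ a) (fun a => hcol _ a)
        (traj W k v t)

theorem iterate_windows {m : ℕ} (hm : 0 < m)
    (Ed : ℕ → Fin m → Fin m → Prop)
    (W : ℕ → Matrix (Fin m) (Fin m) ℝ)
    (hself : ∀ k i, Ed k i i)
    (hW0 : ∀ k i j, 0 ≤ W k i j)
    (hWsupp : ∀ k i j, ¬ Ed k i j → W k i j = 0)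
    (hrow : ∀ k i, ∑ j, W k i j = 1)
    (hcol : ∀ k j, ∑ i, W k i j = 1)
    (η : ℝ) (hη0 : 0 < η) (hη1 : η < 1)
    (hWη : ∀ k i j, Ed k i j → η ≤ W k i j)
    (Q : ℕ)
    (hconn : ∀ k, ∀ i j : Fin m,
      Relation.ReflTransGen (fun u w => ∃ ℓ < Q, Ed (k + ℓ) u w) i j)
    (k : ℕ) (v : Fin m → ℝ) (hmean : ∑ i, v i = 0) (q : ℕ) :
    ∑ i, (traj W k v (Q*q) i) ^ 2 ≤ (1 - η / (m:ℝ)^2) ^ q * ∑ i, (v i) ^ 2 := by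
  have hm1 : (1:ℝ) ≤ (m:ℝ)^2 := by
    have : (1:ℝ) ≤ (m:ℝ) := by exact_mod_cast hm
    nlinarith
  have hρ0 : 0 ≤ 1 - η / (m:ℝ)^2 := by
    have h1 : η / (m:ℝ)^2 ≤ η := div_le_self hη0.le hm1
    linarith
  induction q with
  | zero =>
      rw [Nat.mul_zero, pow_zero, one_mul]
      exact le_of_eq rfl
  | succ q ih =>
      have h1 : Q*(q+1) = Q*q + Q := by ring
      rw [h1, traj_add]
      have hw := window_lemma hm Ed W hself hW0 hWsupp hrow hcol η hη0 hWη Q hconn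
        (k + Q*q) (traj W k v (Q*q)) (by rw [sum_traj W hcol]; exact hmean)
      refine hw.trans ?_
      calc (1 - η / (m:ℝ)^2) * ∑ i, (traj W k v (Q*q) i) ^ 2
          ≤ (1 - η / (m:ℝ)^2) * ((1 - η / (m:ℝ)^2) ^ q * ∑ i, (v i) ^ 2) :=
            mul_le_mul_of_nonneg_left ih hρ0
        _ = (1 - η / (m:ℝ)^2) ^ (q+1) * ∑ i, (v i) ^ 2 := by ring

end PhiAux


set_option maxHeartbeats 1000000

/-- **Geometric convergence rate of the transition matrices** (Lemma 2(b)).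
Under network connectivity (window `Q`) and doubly stochastic weights bounded below by
`η` on edges, for all `k ≥ s ≥ 0` (here `k = s + n`) and all `i, j`,
`|[Φ(k,s)]_{ij} − 1/m| ≤ θ β^(k−s)` where `θ = (1 − η/(4m²))⁻²` and
`β = (1 − η/(4m²))^(1/Q)`. -/
theorem Phi_geometric_rate {m : ℕ} (hm : 0 < m)
    (Ed : ℕ → Fin m → Fin m → Prop)
    (W : ℕ → Matrix (Fin m) (Fin m) ℝ)
    (hself : ∀ k i, Ed k i i)
    (hW0 : ∀ k i j, 0 ≤ W k i j)
    (hWsupp : ∀ k i j, ¬ Ed k i j → W k i j = 0)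
    (hrow : ∀ k i, ∑ j, W k i j = 1)
    (hcol : ∀ k j, ∑ i, W k i j = 1)
    (η : ℝ) (hη0 : 0 < η) (hη1 : η < 1)
    (hWη : ∀ k i j, Ed k i j → η ≤ W k i j)
    (Q : ℕ) (hQ : 1 ≤ Q)
    (hconn : ∀ k, ∀ i j : Fin m,
      Relation.ReflTransGen (fun u w => ∃ ℓ < Q, Ed (k + ℓ) u w) i j) :
    ∀ (s n : ℕ) (i j : Fin m),
      |Phi W s n i j - (m : ℝ)⁻¹| ≤
        ((1 - η / (4 * (m : ℝ) ^ 2)) ^ 2)⁻¹ *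
          ((1 - η / (4 * (m : ℝ) ^ 2)) ^ ((Q : ℝ)⁻¹)) ^ n := by
  intro s n i j
  set c : ℝ := 1 - η / (4 * (m : ℝ) ^ 2) with hcdef
  have hmR : (1:ℝ) ≤ (m:ℝ) := by exact_mod_cast hm
  have hM1 : (1:ℝ) ≤ (m:ℝ)^2 := by nlinarith
  have hM0 : (0:ℝ) < (m:ℝ)^2 := by positivity
  have hd0 : 0 ≤ η / (4 * (m:ℝ)^2) := by positivity
  have hd1 : η / (4 * (m:ℝ)^2) < 1 := by
    rw [div_lt_one (by positivity)]
    nlinarith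
  have hc0 : 0 < c := by rw [hcdef]; linarith
  have hc1 : c ≤ 1 := by rw [hcdef]; linarith
  set v : Fin m → ℝ := fun i => W s i j - (m:ℝ)⁻¹ with hvdef
  have hmne : (m:ℝ) ≠ 0 := by positivity
  have hmean : ∑ i, v i = 0 := by
    simp only [hvdef, Finset.sum_sub_distrib, hcol, Finset.sum_const, Finset.card_univ,
      Fintype.card_fin, nsmul_eq_mul]
    rw [mul_inv_cancel₀ hmne]
    ring
  have hPhi : ∀ i'' : Fin m, PhiAux.traj W (s+1) v n i'' = Phi W s n i'' j - (m:ℝ)⁻¹ := by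
    intro i''
    rw [hvdef, PhiAux.traj_sub_const W hrow (s+1) (fun i0 => W s i0 j) ((m:ℝ)⁻¹) n,
      PhiAux.Phi_eq_traj W s n i'' j]
  have hWle1 : ∀ i', W s i' j ≤ 1 := by
    intro i'
    rw [← hcol s j]
    exact Finset.single_le_sum (fun a _ => hW0 s a j) (Finset.mem_univ i')
  have hV0 : ∑ i', (v i') ^ 2 ≤ 1 := by
    have expand : ∀ i' : Fin m,
        (v i')^2 = (W s i' j)^2 - 2*(m:ℝ)⁻¹*(W s i' j) + ((m:ℝ)⁻¹)^2 := fun i' => by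
      rw [hvdef]; ring
    rw [Finset.sum_congr rfl fun i' _ => expand i']
    rw [Finset.sum_add_distrib, Finset.sum_sub_distrib, ← Finset.mul_sum, hcol,
      Finset.sum_const, Finset.card_univ, Fintype.card_fin, nsmul_eq_mul]
    have hsq : ∑ i', (W s i' j)^2 ≤ 1 := by
      calc ∑ i', (W s i' j)^2 ≤ ∑ i', W s i' j :=
            Finset.sum_le_sum fun i' _ => by nlinarith [hW0 s i' j, hWle1 i']
        _ = 1 := hcol s j
    have hinv0 : (0:ℝ) ≤ (m:ℝ)⁻¹ := by positivity
    have hminv : (m:ℝ) * ((m:ℝ)⁻¹)^2 = (m:ℝ)⁻¹ := by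
      field_simp
    rw [hminv]
    nlinarith [hinv0]
  set q := n / Q with hqdef
  set r := n % Q with hrdef
  have hn : Q * q + r = n := Nat.div_add_mod n Q
  have hrQ : r < Q := Nat.mod_lt _ (by omega)
  set ρ : ℝ := 1 - η/(m:ℝ)^2 with hρdef
  have hρ0 : 0 ≤ ρ := by
    rw [hρdef]
    have := div_le_self hη0.le hM1
    linarith
  have hiter := PhiAux.iterate_windows hm Ed W hself hW0 hWsupp hrow hcol η hη0 hη1 hWη
    Q hconn (s+1) v hmean q
  have hsplit : PhiAux.traj W (s+1) v n
      = PhiAux.traj W (s+1+Q*q) (PhiAux.traj W (s+1) v (Q*q)) r := by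
    rw [← PhiAux.traj_add, hn]
  have hmono := PhiAux.traj_sq_sum_le W hW0 hrow hcol (s+1+Q*q)
    (PhiAux.traj W (s+1) v (Q*q)) r
  have hVn : ∑ i', (PhiAux.traj W (s+1) v n i')^2 ≤ ρ^q := by
    rw [hsplit]
    refine hmono.trans (hiter.trans ?_)
    have h := mul_le_mul_of_nonneg_left hV0 (pow_nonneg hρ0 q)
    simpa using h
  have hpt : (Phi W s n i j - (m:ℝ)⁻¹)^2 ≤ ρ^q := by
    rw [← hPhi i]
    refine le_trans ?_ hVn
    exact Finset.single_le_sum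
      (f := fun i' => (PhiAux.traj W (s+1) v n i')^2)
      (fun i' _ => sq_nonneg _) (Finset.mem_univ i)
  have hρc : ρ ≤ c^2 := by
    rw [hρdef, hcdef]
    have hd : η/(m:ℝ)^2 = 4 * (η/(4*(m:ℝ)^2)) := by
      field_simp
    rw [hd]
    nlinarith [hd0]
  have habs : |Phi W s n i j - (m:ℝ)⁻¹| ≤ c^q := by
    have hcq0 : 0 ≤ c^q := pow_nonneg hc0.le q
    have h2 : (Phi W s n i j - (m:ℝ)⁻¹)^2 ≤ (c^q)^2 := by
      refine hpt.trans ?_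
      calc ρ^q ≤ (c^2)^q := pow_le_pow_left₀ hρ0 hρc q
        _ = (c^q)^2 := by rw [← pow_mul, ← pow_mul, Nat.mul_comm]
    have h3 := Real.sqrt_le_sqrt h2
    rwa [Real.sqrt_sq_eq_abs, Real.sqrt_sq hcq0] at h3
  refine habs.trans ?_
  have hQ0 : (0:ℝ) < (Q:ℝ) := by exact_mod_cast hQ
  have hrw : ((c ^ ((Q:ℝ)⁻¹)) ^ n) = c ^ (((n:ℝ) * (Q:ℝ)⁻¹) : ℝ) := by
    rw [← Real.rpow_natCast (c ^ ((Q:ℝ)⁻¹)) n, ← Real.rpow_mul hc0.le]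
    ring_nf
  have hrw2 : ((c^2)⁻¹ : ℝ) = c ^ (-2 : ℝ) := by
    rw [show ((-2:ℝ)) = -((2:ℕ):ℝ) by norm_num, Real.rpow_neg hc0.le, Real.rpow_natCast]
  rw [hrw, hrw2, ← Real.rpow_add hc0, ← Real.rpow_natCast c q]
  apply Real.rpow_le_rpow_of_exponent_ge hc0 hc1
  have hnlt : (n:ℝ) < (Q:ℝ)*((q:ℝ)+1) := by
    have h : n < Q*(q+1) := by
      calc n = Q*q + r := hn.symm
        _ < Q*q + Q := Nat.add_lt_add_left hrQ _
        _ = Q*(q+1) := by ring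
    calc (n:ℝ) < ((Q*(q+1) : ℕ) : ℝ) := by exact_mod_cast h
      _ = (Q:ℝ)*((q:ℝ)+1) := by push_cast; ring
  have hx : (n:ℝ) * (Q:ℝ)⁻¹ < (q:ℝ) + 1 := by
    rw [← div_eq_mul_inv, div_lt_iff₀ hQ0]
    nlinarith [hnlt]
  linarith
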